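/- Let r be an odd prime, let ζ be a primitive r-th root of unity in ℂ, and let h_r(x) = ∏_{j=1}^{(r−1)/2} (x − (ζ^j + ζ^(−j))) be the minimal polynomial of ζ + ζ^(−1) over ℚ. Then, as polynomials (after clearing denominators), (−X·Y)^((r−1)/2) · (X + Y) · h_r(2 − (X+Y)²/(X·Y)) = X^r + Y^r. -/

import Mathlib

open Polynomial in
lemma prod_range_sub_pow {n : ℕ} (hn : 0 < n) {ζ : ℂ} (hζ : IsPrimitiveRoot ζ n) (z : ℂ) :
    ∏ i ∈ Finset.range n, (z - ζ ^ i) = z ^ n - 1 := by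
  classical
  have h := congrArg (Polynomial.eval z) (X_pow_sub_one_eq_prod hn hζ)
  simp only [eval_sub, eval_pow, eval_X, eval_one, eval_prod, eval_sub, eval_C] at h
  rw [h]
  have himg : nthRootsFinset n (1 : ℂ) = (Finset.range n).image (ζ ^ ·) := by
    rw [nthRootsFinset, hζ.nthRoots_eq (one_pow n)]
    ext x
    simp [Multiset.mem_toFinset, Multiset.mem_map, Multiset.mem_range, Finset.mem_image]
  rw [himg, Finset.prod_image]
  intro i hi j hj hij
  exact hζ.pow_inj (Finset.mem_range.mp hi) (Finset.mem_range.mp hj) hij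

theorem stmt5 (r : ℕ) (hr : r.Prime) (hodd : Odd r) (ζ : ℂ) (hζ : IsPrimitiveRoot ζ r)
    (X Y : ℂ) (hX : X ≠ 0) (hY : Y ≠ 0) :
    (-(X * Y)) ^ ((r - 1) / 2) * (X + Y) *
        ∏ j ∈ Finset.Icc 1 ((r - 1) / 2),
          (2 - (X + Y) ^ 2 / (X * Y) - (ζ ^ j + ζ⁻¹ ^ j)) =
      X ^ r + Y ^ r := by
  classical
  obtain ⟨m, hm⟩ := hodd
  have hrm : r = 2 * m + 1 := by omega
  have hm2 : (r - 1) / 2 = m := by omega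
  subst hrm
  rw [hm2]
  have hrpos : 0 < 2 * m + 1 := by omega
  have hζ0 : ζ ≠ 0 := hζ.ne_zero (by omega)
  have hζr : ζ ^ (2 * m + 1) = 1 := hζ.pow_eq_one
  -- key factorization
  have key : X ^ (2 * m + 1) + Y ^ (2 * m + 1) =
      ∏ i ∈ Finset.range (2 * m + 1), (X + ζ ^ i * Y) := by
    have h1 : ∀ i : ℕ, X + ζ ^ i * Y = (-Y) * ((-X / Y) - ζ ^ i) := by
      intro i; field_simp; ring
    calc X ^ (2 * m + 1) + Y ^ (2 * m + 1)
        = (-Y) ^ (2 * m + 1) * ((-X / Y) ^ (2 * m + 1) - 1) := by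
          have hodd' : Odd (2 * m + 1) := ⟨m, rfl⟩
          rw [hodd'.neg_pow, div_pow, hodd'.neg_pow]
          field_simp
          ring
      _ = (-Y) ^ (2 * m + 1) * ∏ i ∈ Finset.range (2 * m + 1), ((-X / Y) - ζ ^ i) := by
          rw [prod_range_sub_pow hrpos hζ]
      _ = ∏ i ∈ Finset.range (2 * m + 1), (X + ζ ^ i * Y) := by
          rw [Finset.prod_congr rfl (fun i _ => h1 i), Finset.prod_mul_distrib,
            Finset.prod_const, Finset.card_range]
  -- split product
  have hsplit : ∏ i ∈ Finset.range (2 * m + 1), (X + ζ ^ i * Y) =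
      (X + Y) * ∏ j ∈ Finset.Ioc 0 m, ((X + ζ ^ j * Y) * (X + ζ ^ (2 * m + 1 - j) * Y)) := by
    rw [Finset.range_eq_Ico, Finset.prod_eq_prod_Ico_succ_bot hrpos]
    simp only [pow_zero, one_mul]
    congr 1
    have hIco : Finset.Ico 1 (2 * m + 1) = Finset.Ioc 0 (2 * m) := by
      ext x; simp [Finset.mem_Ico, Finset.mem_Ioc]; omega
    rw [hIco, ← Finset.prod_Ioc_consecutive _ (Nat.zero_le m) (by omega : m ≤ 2 * m),
      Finset.prod_mul_distrib]
    congr 1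
    refine Finset.prod_nbij' (fun j => 2 * m + 1 - j) (fun i => 2 * m + 1 - i) ?_ ?_ ?_ ?_ ?_
    · intro a ha; simp only [Finset.mem_Ioc] at *; omega
    · intro a ha; simp only [Finset.mem_Ioc] at *; omega
    · intro a ha; simp only [Finset.mem_Ioc] at ha; beta_reduce; omega
    · intro a ha; simp only [Finset.mem_Ioc] at ha; beta_reduce; omega
    · intro a ha; simp only [Finset.mem_Ioc] at ha; beta_reduce
      rw [Nat.sub_sub_self (by omega)]
  -- per-factor identity
  have hfac : ∀ j ∈ Finset.Ioc 0 m,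
      (X + ζ ^ j * Y) * (X + ζ ^ (2 * m + 1 - j) * Y) =
        (-(X * Y)) * (2 - (X + Y) ^ 2 / (X * Y) - (ζ ^ j + ζ⁻¹ ^ j)) := by
    intro j hj
    simp only [Finset.mem_Ioc] at hj
    have hA : ζ ^ j ≠ 0 := pow_ne_zero _ hζ0
    have hinv : ζ ^ (2 * m + 1 - j) = (ζ ^ j)⁻¹ := by
      have : ζ ^ (2 * m + 1 - j) * ζ ^ j = 1 := by
        rw [← pow_add]
        have : 2 * m + 1 - j + j = 2 * m + 1 := by omega
        rw [this, hζr]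
      exact eq_inv_of_mul_eq_one_left this
    rw [hinv, inv_pow]
    field_simp
    ring
  rw [key, hsplit, Finset.prod_congr rfl hfac, Finset.prod_mul_distrib, Finset.prod_const]
  have hcard : (Finset.Ioc 0 m).card = m := by simp
  have hIcc : Finset.Icc 1 m = Finset.Ioc 0 m := by
    ext x; simp [Finset.mem_Icc, Finset.mem_Ioc]; omega
  rw [hcard, hIcc]
  ring
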